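/- Let L₁,…,L_K be closed subspaces of a real Hilbert space H with L₁^⊥ + ⋯ + L_K^⊥ = H (every element is a finite sum of elements of the complements). Then ρ(D_L) := inf_{‖x‖=1} sup{ |⟨x,g⟩| : g a unit vector in some Lⱼ^⊥ } > 0. -/

import Mathlib

theorem rho_pos_of_sum_of_orthocomplements_eq_top
    {H : Type*} [NormedAddCommGroup H] [InnerProductSpace ℝ H] [CompleteSpace H]
    [Nontrivial H]
    {K : ℕ} (L : Fin K → Submodule ℝ H)
    (hclosed : ∀ k, IsClosed ((L k : Set H)))
    (hsum : ∀ x : H, ∃ f : Fin K → H, (∀ j, f j ∈ (L j)ᗮ) ∧ x = ∑ j, f j) :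
    0 < ⨅ x : {x : H // ‖x‖ = 1},
      sSup {r : ℝ | ∃ g : H, ‖g‖ = 1 ∧ (∃ j, g ∈ (L j)ᗮ) ∧
        r = |(inner ℝ (x : H) g : ℝ)|} := by
  classical
  haveI : ∀ j : Fin K, CompleteSpace ((L j)ᗮ) := fun j =>
    (Submodule.isClosed_orthogonal (L j)).completeSpace_coe
  -- the summation map
  set T : (∀ j : Fin K, (L j)ᗮ) →L[ℝ] H :=
    ∑ j, ((L j)ᗮ.subtypeL).comp (ContinuousLinearMap.proj j) with hT
  have hTapp : ∀ y, T y = ∑ j, (y j : H) := by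
    intro y
    simp [hT, ContinuousLinearMap.sum_apply]
  have hsurj : Function.Surjective T := by
    intro x
    obtain ⟨f, hf, hx⟩ := hsum x
    exact ⟨fun j => ⟨f j, hf j⟩, by rw [hTapp]; exact hx.symm⟩
  obtain ⟨C, hC, hpre⟩ := T.exists_preimage_norm_le hsurj
  -- K is positive
  obtain ⟨x₀, hx₀⟩ := exists_ne (0 : H)
  have hK : 0 < K := by
    rcases Nat.eq_zero_or_pos K with h | h
    · exfalso
      obtain ⟨f, _, hx⟩ := hsum x₀
      subst h
      simp at hx
      exact hx₀ hx
    · exact h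
  -- there exists a unit vector in some orthocomplement
  have hg0 : ∃ g : H, ‖g‖ = 1 ∧ ∃ j, g ∈ (L j)ᗮ := by
    obtain ⟨f, hf, hx⟩ := hsum x₀
    have : ∃ j, f j ≠ 0 := by
      by_contra h
      push_neg at h
      apply hx₀
      rw [hx]
      exact Finset.sum_eq_zero fun j _ => h j
    obtain ⟨j, hj⟩ := this
    refine ⟨‖f j‖⁻¹ • f j, ?_, j, Submodule.smul_mem _ _ (hf j)⟩
    rw [norm_smul, norm_inv, norm_norm, inv_mul_cancel₀ (norm_ne_zero_iff.mpr hj)]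
  -- the set, its nonemptiness and boundedness
  have hne : ∀ x : H, {r : ℝ | ∃ g : H, ‖g‖ = 1 ∧ (∃ j, g ∈ (L j)ᗮ) ∧
      r = |(inner ℝ (x : H) g : ℝ)|}.Nonempty := by
    intro x
    obtain ⟨g, hg1, hgj⟩ := hg0
    exact ⟨|(inner ℝ x g : ℝ)|, g, hg1, hgj, rfl⟩
  have hbdd : ∀ x : H, BddAbove {r : ℝ | ∃ g : H, ‖g‖ = 1 ∧ (∃ j, g ∈ (L j)ᗮ) ∧
      r = |(inner ℝ (x : H) g : ℝ)|} := by
    intro x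
    refine ⟨‖x‖, ?_⟩
    rintro r ⟨g, hg1, _, rfl⟩
    calc |(inner ℝ x g : ℝ)| ≤ ‖x‖ * ‖g‖ := abs_real_inner_le_norm x g
      _ = ‖x‖ := by rw [hg1, mul_one]
  -- main lower bound
  have key : ∀ x : {x : H // ‖x‖ = 1}, ((K : ℝ) * C)⁻¹ ≤
      sSup {r : ℝ | ∃ g : H, ‖g‖ = 1 ∧ (∃ j, g ∈ (L j)ᗮ) ∧
        r = |(inner ℝ (x : H) g : ℝ)|} := by
    rintro ⟨x, hx⟩
    set S := {r : ℝ | ∃ g : H, ‖g‖ = 1 ∧ (∃ j, g ∈ (L j)ᗮ) ∧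
        r = |(inner ℝ (x : H) g : ℝ)|} with hS
    set s := sSup S with hs
    have hs0 : 0 ≤ s := by
      obtain ⟨r, g, hg1, hgj, hr⟩ := hne x
      have : r ∈ S := ⟨g, hg1, hgj, hr⟩
      calc (0:ℝ) ≤ r := by rw [hr]; exact abs_nonneg _
        _ ≤ s := le_csSup (hbdd x) this
    obtain ⟨y, hTy, hy⟩ := hpre x
    rw [hx, mul_one] at hy
    have hterm : ∀ j : Fin K, (inner ℝ x ((y j : H)) : ℝ) ≤ C * s := by
      intro j
      have hyj : ‖(y j : H)‖ ≤ C := by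
        calc ‖(y j : H)‖ = ‖y j‖ := rfl
          _ ≤ ‖y‖ := norm_le_pi_norm y j
          _ ≤ C := hy
      have habs : |(inner ℝ x ((y j : H)) : ℝ)| ≤ ‖(y j : H)‖ * s := by
        rcases eq_or_ne (y j : H) 0 with h0 | h0
        · simp [h0]
        · have hg1 : ‖‖(y j : H)‖⁻¹ • (y j : H)‖ = 1 := by
            rw [norm_smul, norm_inv, norm_norm,
              inv_mul_cancel₀ (norm_ne_zero_iff.mpr h0)]
          have hmem : |(inner ℝ x (‖(y j : H)‖⁻¹ • (y j : H)) : ℝ)| ∈ S :=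
            ⟨_, hg1, ⟨j, Submodule.smul_mem _ _ (y j).2⟩, rfl⟩
          have hle : |(inner ℝ x (‖(y j : H)‖⁻¹ • (y j : H)) : ℝ)| ≤ s :=
            le_csSup (hbdd x) hmem
          rw [real_inner_smul_right, abs_mul, abs_inv, abs_norm] at hle
          have hnorm_pos : (0:ℝ) < ‖(y j : H)‖ := norm_pos_iff.mpr h0
          calc |(inner ℝ x ((y j : H)) : ℝ)|
              = ‖(y j : H)‖ * (‖(y j : H)‖⁻¹ * |(inner ℝ x ((y j : H)) : ℝ)|) := by
                field_simp
            _ ≤ ‖(y j : H)‖ * s := by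
                exact mul_le_mul_of_nonneg_left hle hnorm_pos.le
      calc (inner ℝ x ((y j : H)) : ℝ) ≤ |(inner ℝ x ((y j : H)) : ℝ)| := le_abs_self _
        _ ≤ ‖(y j : H)‖ * s := habs
        _ ≤ C * s := mul_le_mul_of_nonneg_right hyj hs0
    have hone : (1 : ℝ) ≤ (K : ℝ) * C * s := by
      have h1 : (1 : ℝ) = inner ℝ x x := by
        rw [real_inner_self_eq_norm_sq, hx, one_pow]
      calc (1 : ℝ) = inner ℝ x x := h1
        _ = inner ℝ x (∑ j, (y j : H)) := by rw [← hTapp y, hTy]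
        _ = ∑ j, (inner ℝ x ((y j : H)) : ℝ) := by rw [inner_sum]
        _ ≤ ∑ _j : Fin K, C * s := Finset.sum_le_sum fun j _ => hterm j
        _ = (K : ℝ) * C * s := by
            rw [Finset.sum_const, Finset.card_univ, Fintype.card_fin,
              nsmul_eq_mul, mul_assoc]
    have hKC : (0:ℝ) < (K : ℝ) * C :=
      mul_pos (by exact_mod_cast hK) hC
    rw [inv_le_iff_one_le_mul₀ hKC]
    calc (1:ℝ) ≤ (K : ℝ) * C * s := hone
      _ = s * ((K:ℝ) * C) := by ring
  have hKC : (0:ℝ) < ((K : ℝ) * C)⁻¹ := by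
    apply inv_pos.mpr
    exact mul_pos (by exact_mod_cast hK) hC
  haveI : Nonempty {x : H // ‖x‖ = 1} := by
    obtain ⟨g, hg1, _⟩ := hg0
    exact ⟨⟨g, hg1⟩⟩
  exact lt_of_lt_of_le hKC (le_ciInf key)
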